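/- Let u : ∂D → ℝ be continuous with u(e^{iθ}) = 0 for all |θ| ≤ π/2, and let ũ be its Poisson (harmonic) extension to D, ũ(z) := (1/2π) ∫_{−π}^{π} (1 − |z|²) |e^{iθ} − z|^{−2} u(e^{iθ}) dθ. Then the limit lim_{x → 1⁻} ũ(x)/(x − 1) exists and equals (1/2π) ∫_{−π}^{π} u(e^{iθ}) / (cos θ − 1) dθ; i.e. the partial derivative ∂_x ũ at the boundary point 1 along the real axis equals this integral (which is well defined since u vanishes on the arc {|θ| ≤ π/2} and cos θ − 1 ≤ −1 on its complement). -/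

import Mathlib

open Set Real Filter intervalIntegral

noncomputable section

/-- The Poisson (harmonic) extension of a boundary function `u(e^{iθ})`, evaluated at a real
point `x` of the disc. -/
def poissonExt (u : ℝ → ℝ) (x : ℝ) : ℝ :=
  (1 / (2 * π)) * ∫ θ in (-π)..π,
    ((1 - x ^ 2) / ‖Complex.exp (θ * Complex.I) - (x : ℂ)‖ ^ 2) * u θ

lemma poisson_absSq (x θ : ℝ) :
    ‖Complex.exp (θ * Complex.I) - (x : ℂ)‖ ^ 2
      = 1 - 2 * x * Real.cos θ + x ^ 2 := by
  rw [Complex.sq_norm, Complex.normSq_apply]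
  simp only [Complex.sub_re, Complex.sub_im, Complex.exp_ofReal_mul_I_re,
    Complex.exp_ofReal_mul_I_im, Complex.ofReal_re, Complex.ofReal_im, sub_zero]
  linear_combination Real.sin_sq_add_cos_sq θ

lemma poisson_Dpos {x : ℝ} (hx0 : 0 < x) (hx1 : x < 1) (θ : ℝ) :
    0 < 1 - 2 * x * Real.cos θ + x ^ 2 := by
  nlinarith [Real.cos_le_one θ, sq_nonneg (1 - x)]

/-- If `u : ∂D → ℝ` is continuous and vanishes on the arc `{|θ| ≤ π/2}`, then
the radial boundary derivative of its Poisson extension at the point `1` along the real axis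
exists and equals `(1/2π) ∫_{-π}^{π} u(e^{iθ}) / (cos θ - 1) dθ`:
`lim_{x → 1⁻} ũ(x)/(x - 1) = (1/2π) ∫_{-π}^{π} u(e^{iθ})/(cos θ - 1) dθ`. -/
theorem poisson_boundary_derivative (u : ℝ → ℝ) (hu : Continuous u)
    (hper : Function.Periodic u (2 * π)) (hvan : ∀ θ : ℝ, |θ| ≤ π / 2 → u θ = 0) :
    Tendsto (fun x : ℝ => poissonExt u x / (x - 1)) (nhdsWithin 1 (Iio 1))
      (nhds ((1 / (2 * π)) * ∫ θ in (-π)..π, u θ / (Real.cos θ - 1))) := by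
  obtain ⟨C, hC⟩ := (isCompact_Icc (a := -π) (b := π)).exists_bound_of_continuousOn
    hu.continuousOn
  have hpi : (0:ℝ) < π := Real.pi_pos
  have hC0 : 0 ≤ C := le_trans (norm_nonneg (u 0)) (hC 0 ⟨by linarith, by linarith⟩)
  set F : ℝ → ℝ → ℝ := fun x θ => (-(1 + x) / (1 - 2 * x * Real.cos θ + x ^ 2)) * u θ with hF
  have hIoo : Ioo (0:ℝ) 1 ∈ nhdsWithin 1 (Iio 1) :=
    Ioo_mem_nhdsLT_of_mem ⟨by norm_num, le_refl 1⟩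
  have key : Tendsto (fun x => ∫ θ in (-π)..π, F x θ) (nhdsWithin 1 (Iio 1))
      (nhds (∫ θ in (-π)..π, u θ / (Real.cos θ - 1))) := by
    apply intervalIntegral.tendsto_integral_filter_of_dominated_convergence
      (bound := fun _ => 2 * C)
    · filter_upwards [hIoo] with x hx
      have hcont : Continuous fun θ => F x θ := by
        apply Continuous.mul _ hu
        apply Continuous.div continuous_const (by fun_prop)
        intro θ; exact (poisson_Dpos hx.1 hx.2 θ).ne'
      exact hcont.aestronglyMeasurable
    · filter_upwards [hIoo] with x hx
      apply MeasureTheory.ae_of_all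
      intro θ hθ
      rw [Set.uIoc_of_le (by linarith : -π ≤ π)] at hθ
      by_cases habs : |θ| ≤ π / 2
      · simp [hF, hvan θ habs]; positivity
      · push_neg at habs
        have hθpi : |θ| ≤ π := abs_le.2 ⟨hθ.1.le, hθ.2⟩
        have hcos : Real.cos θ ≤ 0 := by
          rw [← Real.cos_abs]
          exact Real.cos_nonpos_of_pi_div_two_le_of_le habs.le (by linarith)
        have hD : (1:ℝ) ≤ 1 - 2 * x * Real.cos θ + x ^ 2 := by nlinarith [hx.1]
        have hDpos : (0:ℝ) < 1 - 2 * x * Real.cos θ + x ^ 2 := by linarith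
        have h1 : |(-(1 + x) / (1 - 2 * x * Real.cos θ + x ^ 2))| ≤ 2 := by
          rw [abs_div, abs_neg, abs_of_pos (by linarith [hx.1] : (0:ℝ) < 1 + x),
            abs_of_pos hDpos]
          calc (1 + x) / (1 - 2 * x * Real.cos θ + x ^ 2) ≤ (1 + x) / 1 :=
                div_le_div_of_nonneg_left (by linarith [hx.1]) one_pos hD
            _ ≤ 2 := by simp; linarith [hx.2]
        have h2 : |u θ| ≤ C := hC θ ⟨hθ.1.le, hθ.2⟩
        calc ‖F x θ‖ = |(-(1 + x) / (1 - 2 * x * Real.cos θ + x ^ 2))| * |u θ| := by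
              rw [hF]; exact abs_mul _ _
          _ ≤ 2 * C := mul_le_mul h1 h2 (abs_nonneg _) (by norm_num)
    · exact intervalIntegrable_const
    · have hae : ∀ᵐ θ : ℝ, θ ≠ (0:ℝ) := by
        rw [MeasureTheory.ae_iff]
        simpa using MeasureTheory.measure_singleton (0:ℝ)
      filter_upwards [hae] with θ hθ0 hθ
      rw [Set.uIoc_of_le (by linarith : -π ≤ π)] at hθ
      have hθpi : |θ| ≤ π := abs_le.2 ⟨hθ.1.le, hθ.2⟩
      have hcos1 : Real.cos θ < 1 := by
        rw [← Real.cos_abs]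
        have := Real.strictAntiOn_cos (left_mem_Icc.2 hpi.le)
          ⟨abs_nonneg θ, hθpi⟩ (abs_pos.2 hθ0)
        simpa using this
      have hne : (1 - 2 * 1 * Real.cos θ + 1 ^ 2) ≠ 0 := by nlinarith
      have hc : ContinuousAt (fun x : ℝ => F x θ) 1 := by
        apply ContinuousAt.mul _ continuousAt_const
        exact ContinuousAt.div (by fun_prop) (by fun_prop) hne
      have := hc.tendsto.mono_left (nhdsWithin_le_nhds (s := Iio (1:ℝ)))
      have hval : F 1 θ = u θ / (Real.cos θ - 1) := by
        rw [hF]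
        have hc1 : Real.cos θ - 1 ≠ 0 := by linarith
        show -(1 + 1) / (1 - 2 * 1 * Real.cos θ + 1 ^ 2) * u θ = u θ / (Real.cos θ - 1)
        rw [div_mul_eq_mul_div, div_eq_div_iff hne hc1, ← sub_eq_zero]
        ring
      rw [hval] at this
      exact this
  have key2 := key.const_mul (1 / (2 * π))
  apply key2.congr'
  filter_upwards [hIoo] with x hx
  have hx1 : x - 1 ≠ 0 := by have := hx.2; intro h; linarith [sub_eq_zero.mp h]
  rw [poissonExt, mul_div_assoc, ← intervalIntegral.integral_div]
  congr 1
  apply intervalIntegral.integral_congr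
  intro θ _
  dsimp only
  rw [poisson_absSq]
  have hD := poisson_Dpos hx.1 hx.2 θ
  rw [hF]
  field_simp
  ring

end
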